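/- Let A be a residuated lattice, F a filter of A, n ≥ 2, and let m₁, …, mₙ be pairwise distinct F-minimal prime filters of A. Then there exist a₁, …, aₙ ∈ A with aᵢ ∨ aⱼ ∈ F for all i ≠ j and aᵢ ∉ mᵢ for each i. Moreover, setting bᵢ = ⊙_{j ≠ i} aⱼ, one has: (1) bᵢ ∈ mᵢ for each i; (2) b₁ ∨ ⋯ ∨ bₙ ∈ F; (3) (F : ⋁_{j ≠ i} bⱼ) ⊆ mᵢ for each i. -/
import Mathlib


class ResiduatedLattice (α : Type*) extends Lattice α, CommMonoid α, BoundedOrder α where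
  rimp : α → α → α
  one_eq_top : (1 : α) = ⊤
  adjunction : ∀ x y z : α, x * y ≤ z ↔ x ≤ rimp y z

variable {α : Type*} [ResiduatedLattice α]

/-- A filter of a residuated lattice: nonempty, closed under `⊙` and upward closed. -/
def IsFilter (F : Set α) : Prop :=
  F.Nonempty ∧ (∀ x ∈ F, ∀ y ∈ F, x * y ∈ F) ∧ ∀ x ∈ F, ∀ y : α, x ≤ y → y ∈ F

/-- A prime filter: a proper filter such that `x ⊔ y ∈ P` implies `x ∈ P` or `y ∈ P`. -/
def IsPrimeFilter (P : Set α) : Prop :=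
  IsFilter P ∧ P ≠ Set.univ ∧ ∀ x y : α, x ⊔ y ∈ P → x ∈ P ∨ y ∈ P

/-- A `∨`-closed subset: nonempty and closed under join. -/
def IsJoinClosed (C : Set α) : Prop :=
  C.Nonempty ∧ ∀ x ∈ C, ∀ y ∈ C, x ⊔ y ∈ C

/-- The filter generated by a set. -/
def filterGen (X : Set α) : Set α := ⋂₀ {G : Set α | IsFilter G ∧ X ⊆ G}

/-- An `X`-minimal prime filter: prime, contains `X`, minimal among primes containing `X`. -/
def IsMinPrimeOver (X P : Set α) : Prop :=
  IsPrimeFilter P ∧ X ⊆ P ∧ ∀ Q : Set α, IsPrimeFilter Q → X ⊆ Q → Q ⊆ P → Q = P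

/-- `ω_F(X) = {a | x ∨ a ∈ F for some x ∈ X}`. -/
def omegaF (F X : Set α) : Set α := {a : α | ∃ x ∈ X, x ⊔ a ∈ F}

/-- The coannihilator `(F : x) = {a | x ∨ a ∈ F}`. -/
def coann (F : Set α) (x : α) : Set α := {a : α | x ⊔ a ∈ F}

/-- `D_F(H) = {a | x ∨ a ∈ F for some x ∉ H}`, the set of `F`-divisors of `H`. -/
def divisorsF (F H : Set α) : Set α := {a : α | ∃ x ∉ H, x ⊔ a ∈ F}

/-- A lattice ideal: nonempty, closed under join and downward closed. -/
def IsLatticeIdeal (I : Set α) : Prop :=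
  I.Nonempty ∧ (∀ x ∈ I, ∀ y ∈ I, x ⊔ y ∈ I) ∧ ∀ x y : α, x ≤ y → y ∈ I → x ∈ I

/-- The lattice ideal generated by a set. -/
def idealGen (X : Set α) : Set α := ⋂₀ {I : Set α | IsLatticeIdeal I ∧ X ⊆ I}

/-- An `ω_F`-filter: a filter of the form `ω_F(I)` for some lattice ideal `I`. -/
def IsOmegaFilter (F H : Set α) : Prop :=
  IsFilter H ∧ ∃ I : Set α, IsLatticeIdeal I ∧ H = omegaF F I

section Aux
open ResiduatedLattice

lemma rl_le_one (a : α) : a ≤ 1 := by rw [one_eq_top (α := α)]; exact le_top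

lemma rl_mul_le_mul_left {a b : α} (c : α) (h : a ≤ b) : a * c ≤ b * c :=
  (adjunction a c (b*c)).mpr (le_trans h ((adjunction b c (b*c)).mp le_rfl))

lemma rl_mul_le_mul {a b c d : α} (h1 : a ≤ b) (h2 : c ≤ d) : a * c ≤ b * d := by
  refine le_trans (rl_mul_le_mul_left c h1) ?_
  rw [mul_comm b c, mul_comm b d]; exact rl_mul_le_mul_left b h2

lemma rl_mul_le_left (a b : α) : a * b ≤ a := by
  have := rl_mul_le_mul (le_refl a) (rl_le_one b); rwa [mul_one] at this

lemma rl_mul_le_right (a b : α) : a * b ≤ b := by rw [mul_comm]; exact rl_mul_le_left b a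

lemma rl_mul_sup (a b c : α) : a * (b ⊔ c) = a * b ⊔ a * c := by
  apply le_antisymm
  · rw [mul_comm]
    refine (adjunction _ _ _).mpr (sup_le ?_ ?_)
    · exact (adjunction b a _).mp (by rw [mul_comm]; exact le_sup_left)
    · exact (adjunction c a _).mp (by rw [mul_comm]; exact le_sup_right)
  · exact sup_le (rl_mul_le_mul le_rfl le_sup_left) (rl_mul_le_mul le_rfl le_sup_right)

lemma rl_pow_add_le (x y : α) : ∀ n k l : ℕ, k + l = n → (x ⊔ y) ^ n ≤ x ^ k ⊔ y ^ l := by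
  intro n
  induction n with
  | zero => intro k l h
            obtain ⟨hk, hl⟩ := Nat.add_eq_zero.mp h
            subst hk; subst hl; simp [pow_zero]
  | succ n ih =>
    intro k l h
    match k, l with
    | 0, l => refine le_trans (rl_le_one _) ?_; rw [pow_zero]; exact le_sup_left
    | k+1, 0 => refine le_trans (rl_le_one _) ?_; rw [pow_zero]; exact le_sup_right
    | k+1, l+1 =>
      have hk : k + (l+1) = n := by omega
      have hl : (k+1) + l = n := by omega
      have e : (x ⊔ y) ^ (n+1) = x * (x ⊔ y)^n ⊔ y * (x ⊔ y)^n := by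
        rw [pow_succ, rl_mul_sup, mul_comm ((x ⊔ y)^n) x, mul_comm ((x ⊔ y)^n) y]
      rw [e]
      apply sup_le
      · refine le_trans (rl_mul_le_mul le_rfl (ih k (l+1) hk)) ?_
        rw [rl_mul_sup]
        apply sup_le
        · rw [← pow_succ']; exact le_sup_left
        · exact le_trans (rl_mul_le_right _ _) le_sup_right
      · refine le_trans (rl_mul_le_mul le_rfl (ih (k+1) l hl)) ?_
        rw [rl_mul_sup]
        apply sup_le
        · exact le_trans (rl_mul_le_right _ _) le_sup_left
        · rw [← pow_succ']; exact le_sup_right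

-- filter lemmas
lemma filt_top_mem {F : Set α} (hF : IsFilter F) : (1 : α) ∈ F := by
  obtain ⟨⟨x, hx⟩, _, hup⟩ := hF
  exact hup x hx 1 (rl_le_one x)

lemma filt_up {F : Set α} (hF : IsFilter F) {x y : α} (hx : x ∈ F) (h : x ≤ y) : y ∈ F :=
  hF.2.2 x hx y h

lemma filt_mul {F : Set α} (hF : IsFilter F) {x y : α} (hx : x ∈ F) (hy : y ∈ F) : x * y ∈ F :=
  hF.2.1 x hx y hy

lemma filt_pow {F : Set α} (hF : IsFilter F) {x : α} (hx : x ∈ F) (n : ℕ) : x ^ n ∈ F := by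
  induction n with
  | zero => rw [pow_zero]; exact filt_top_mem hF
  | succ n ih => rw [pow_succ]; exact filt_mul hF ih hx

lemma filt_prod {F : Set α} (hF : IsFilter F) {ι : Type*} {S : Finset ι} {f : ι → α}
    (h : ∀ i ∈ S, f i ∈ F) : (∏ i ∈ S, f i) ∈ F := by
  classical
  refine Finset.prod_induction f (· ∈ F) (fun a b ha hb => filt_mul hF ha hb)
    (filt_top_mem hF) h

lemma prime_bot_notMem {P : Set α} (hP : IsPrimeFilter P) : (⊥ : α) ∉ P := by
  intro hb
  exact hP.2.1 (Set.eq_univ_of_forall fun x => filt_up hP.1 hb bot_le)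

lemma notMem_of_le_notMem {P : Set α} (hP : IsFilter P) {x y : α}
    (h : x ≤ y) (hy : x ∉ P) : ¬ (x ∈ P) := hy

lemma down_notMem {P : Set α} (hP : IsFilter P) {x y : α} (h : x ≤ y) (hy : y ∉ P) : x ∉ P :=
  fun hx => hy (filt_up hP hx h)

lemma prime_sup_mem {P : Set α} (hP : IsPrimeFilter P) {ι : Type*} {S : Finset ι} {f : ι → α}
    (h : S.sup f ∈ P) : ∃ i ∈ S, f i ∈ P := by
  classical
  induction S using Finset.cons_induction with
  | empty => simp only [Finset.sup_empty] at h; exact absurd h (prime_bot_notMem hP)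
  | cons a s ha ih =>
    rw [Finset.sup_cons] at h
    rcases hP.2.2 _ _ h with h1 | h2
    · exact ⟨a, Finset.mem_cons_self a s, h1⟩
    · obtain ⟨i, hi, hfi⟩ := ih h2
      exact ⟨i, Finset.mem_cons_of_mem hi, hfi⟩

lemma rl_prod_le {ι : Type*} [DecidableEq ι] {S : Finset ι} {f : ι → α} {j : ι} (hj : j ∈ S) :
    (∏ i ∈ S, f i) ≤ f j := by
  rw [← Finset.mul_prod_erase S f hj]
  exact rl_mul_le_left _ _

lemma rl_prod_sup_le {ι : Type*} (S : Finset ι) (c : α) (g : ι → α) :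
    (∏ j ∈ S, (c ⊔ g j)) ≤ c ⊔ ∏ j ∈ S, g j := by
  classical
  induction S using Finset.cons_induction with
  | empty => simp only [Finset.prod_empty]; exact le_sup_right
  | cons a s ha ih =>
    rw [Finset.prod_cons, Finset.prod_cons]
    refine le_trans (rl_mul_le_mul le_rfl ih) ?_
    rw [rl_mul_sup]
    apply sup_le
    · exact le_trans (rl_mul_le_right _ _) le_sup_left
    · rw [mul_comm (c ⊔ g a) (∏ j ∈ s, g j), rl_mul_sup]
      apply sup_le
      · exact le_trans (rl_mul_le_right _ _) le_sup_left
      · rw [mul_comm]; exact le_sup_right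

lemma rl_mul_finsup {ι : Type*} {S : Finset ι} (hS : S.Nonempty) (c : α) (g : ι → α) :
    c * S.sup g = S.sup fun i => c * g i := by
  classical
  induction S using Finset.cons_induction with
  | empty => exact absurd hS (by simp)
  | cons a s ha ih =>
    rcases s.eq_empty_or_nonempty with rfl | hs
    · simp
    · rw [Finset.sup_cons, Finset.sup_cons, rl_mul_sup, ih hs]

open ResiduatedLattice in
lemma exists_prime_disjoint (F C : Set α) (hF : IsFilter F) (hC : IsJoinClosed C)
    (hd : Disjoint F C) : ∃ Q : Set α, IsPrimeFilter Q ∧ F ⊆ Q ∧ Disjoint Q C := by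
  classical
  set S : Set (Set α) := {G : Set α | IsFilter G ∧ F ⊆ G ∧ Disjoint G C} with hS
  have hFS : F ∈ S := ⟨hF, subset_rfl, hd⟩
  have hchainub : ∀ c ⊆ S, IsChain (· ⊆ ·) c → c.Nonempty → ∃ ub ∈ S, ∀ s ∈ c, s ⊆ ub := by
    intro c hcS hchain hcne
    refine ⟨⋃₀ c, ⟨⟨?_, ?_, ?_⟩, ?_, ?_⟩, fun s hs => Set.subset_sUnion_of_mem hs⟩
    · obtain ⟨G, hG⟩ := hcne
      obtain ⟨g, hg⟩ := (hcS hG).1.1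
      exact ⟨g, G, hG, hg⟩
    · rintro u ⟨G1, hG1, hu⟩ v ⟨G2, hG2, hv⟩
      rcases hchain.total hG1 hG2 with h | h
      · exact ⟨G2, hG2, filt_mul (hcS hG2).1 (h hu) hv⟩
      · exact ⟨G1, hG1, filt_mul (hcS hG1).1 hu (h hv)⟩
    · rintro u ⟨G1, hG1, hu⟩ v huv
      exact ⟨G1, hG1, filt_up (hcS hG1).1 hu huv⟩
    · obtain ⟨G, hG⟩ := hcne
      exact ((hcS hG).2.1).trans (Set.subset_sUnion_of_mem hG)
    · rw [Set.disjoint_left]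
      rintro u ⟨G1, hG1, hu⟩ huC
      exact Set.disjoint_left.mp (hcS hG1).2.2 hu huC
  obtain ⟨Q, hFQ, hQS, hQmax⟩ := zorn_subset_nonempty S hchainub F hFS
  · -- Q is maximal; show it is prime
    obtain ⟨hQfil, hFsubQ, hQdisj⟩ := hQS
    have hproper : Q ≠ Set.univ := by
      intro h
      obtain ⟨c, hc⟩ := hC.1
      exact (Set.disjoint_left.mp hQdisj (h ▸ Set.mem_univ c)) hc
    refine ⟨Q, ⟨hQfil, hproper, ?_⟩, hFsubQ, hQdisj⟩
    intro x y hxy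
    by_contra hcon
    push_neg at hcon
    obtain ⟨hx, hy⟩ := hcon
    -- extension filters
    have ext_spec : ∀ z : α, z ∉ Q →
        ∃ c ∈ C, ∃ q ∈ Q, ∃ k : ℕ, q * z ^ k ≤ c := by
      intro z hz
      set G : Set α := {w : α | ∃ q ∈ Q, ∃ k : ℕ, q * z ^ k ≤ w} with hG
      have hGfil : IsFilter G := by
        refine ⟨⟨z, ?_⟩, ?_, ?_⟩
        · obtain ⟨q, hq⟩ := hQfil.1
          exact ⟨q, hq, 1, by rw [pow_one]; exact rl_mul_le_right _ _⟩
        · rintro w1 ⟨q1, hq1, k1, h1⟩ w2 ⟨q2, hq2, k2, h2⟩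
          refine ⟨q1 * q2, filt_mul hQfil hq1 hq2, k1 + k2, ?_⟩
          have : q1 * q2 * z ^ (k1 + k2) = (q1 * z ^ k1) * (q2 * z ^ k2) := by
            rw [pow_add]; ac_rfl
          rw [this]
          exact rl_mul_le_mul h1 h2
        · rintro w ⟨q, hq, k, h1⟩ w' hw
          exact ⟨q, hq, k, le_trans h1 hw⟩
      have hQG : Q ⊆ G := fun q hq =>
        ⟨q, hq, 0, by rw [pow_zero, mul_one]⟩
      have hzG : z ∈ G := by
        obtain ⟨q, hq⟩ := hQfil.1
        exact ⟨q, hq, 1, by rw [pow_one]; exact rl_mul_le_right _ _⟩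
      have hGne : ¬ (G ∈ S) := by
        intro hGS
        have := hQmax hGS hQG
        exact hz (this hzG)
      have : ¬ Disjoint G C := fun h => hGne ⟨hGfil, hFsubQ.trans hQG, h⟩
      rw [Set.not_disjoint_iff] at this
      obtain ⟨c, hcG, hcC⟩ := this
      exact ⟨c, hcC, hcG⟩
    obtain ⟨c1, hc1C, q1, hq1, k1, h1⟩ := ext_spec x hx
    obtain ⟨c2, hc2C, q2, hq2, k2, h2⟩ := ext_spec y hy
    have hcC : c1 ⊔ c2 ∈ C := hC.2 c1 hc1C c2 hc2C
    have hle : q1 * q2 * (x ⊔ y) ^ (k1 + k2) ≤ c1 ⊔ c2 := by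
      refine le_trans (rl_mul_le_mul le_rfl (rl_pow_add_le x y (k1+k2) k1 k2 rfl)) ?_
      rw [rl_mul_sup]
      apply sup_le
      · refine le_trans ?_ (le_trans h1 le_sup_left)
        calc q1 * q2 * x ^ k1 = (q1 * x ^ k1) * q2 := by ac_rfl
          _ ≤ q1 * x ^ k1 := rl_mul_le_left _ _
      · refine le_trans ?_ (le_trans h2 le_sup_right)
        calc q1 * q2 * y ^ k2 = (q2 * y ^ k2) * q1 := by ac_rfl
          _ ≤ q2 * y ^ k2 := rl_mul_le_left _ _
    have hmem : q1 * q2 * (x ⊔ y) ^ (k1 + k2) ∈ Q :=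
      filt_mul hQfil (filt_mul hQfil hq1 hq2) (filt_pow hQfil hxy _)
    have : c1 ⊔ c2 ∈ Q := filt_up hQfil hmem hle
    exact Set.disjoint_left.mp hQdisj this hcC

lemma minprime_witness {F P : Set α} (hF : IsFilter F) (hP : IsMinPrimeOver F P)
    {t : α} (ht : t ∈ P) : ∃ r, r ∉ P ∧ t ⊔ r ∈ F := by
  classical
  by_contra hcon
  push_neg at hcon
  -- every r with t ⊔ r ∈ F lies in P
  have hcon' : ∀ r : α, t ⊔ r ∈ F → r ∈ P := by
    intro r hr
    by_contra h
    exact (hcon r h) hr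
  obtain ⟨hPprime, hFP, hmin⟩ := hP
  -- P is proper, pick y0 ∉ P
  have : P ≠ Set.univ := hPprime.2.1
  obtain ⟨y0, hy0⟩ : ∃ y0, y0 ∉ P := by
    by_contra h
    push_neg at h
    exact this (Set.eq_univ_of_forall h)
  set C : Set α := {c | c ∉ P} ∪ {c | ∃ y ∉ P, c = t ⊔ y} ∪ {t} with hC
  have htC : t ∈ C := Or.inr rfl
  have hCjoin : IsJoinClosed C := by
    constructor
    · exact ⟨t, htC⟩
    · rintro u hu v hv
      have notP : ∀ w1 w2 : α, w1 ∉ P → w2 ∉ P → w1 ⊔ w2 ∉ P := by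
        intro w1 w2 h1 h2 h
        rcases hPprime.2.2 _ _ h with h | h
        · exact h1 h
        · exact h2 h
      rcases hu with (hu | ⟨y1, hy1, rfl⟩) | hu
      · rcases hv with (hv | ⟨y2, hy2, rfl⟩) | hv
        · exact Or.inl (Or.inl (notP _ _ hu hv))
        · exact Or.inl (Or.inr ⟨u ⊔ y2, notP _ _ hu hy2, by ac_rfl⟩)
        · rw [Set.mem_singleton_iff] at hv
          exact Or.inl (Or.inr ⟨u, hu, by rw [hv, sup_comm]⟩)
      · rcases hv with (hv | ⟨y2, hy2, rfl⟩) | hv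
        · exact Or.inl (Or.inr ⟨y1 ⊔ v, notP _ _ hy1 hv, by ac_rfl⟩)
        · exact Or.inl (Or.inr ⟨y1 ⊔ y2, notP _ _ hy1 hy2, by ac_rfl⟩)
        · rw [Set.mem_singleton_iff] at hv; subst hv
          exact Or.inl (Or.inr ⟨y1, hy1, by ac_rfl⟩)
      · rw [Set.mem_singleton_iff] at hu; subst hu
        rcases hv with (hv | ⟨y2, hy2, rfl⟩) | hv
        · exact Or.inl (Or.inr ⟨v, hv, rfl⟩)
        · exact Or.inl (Or.inr ⟨y2, hy2, by ac_rfl⟩)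
        · rw [Set.mem_singleton_iff] at hv; subst hv
          exact Or.inr (by simp)
  have hdisj : Disjoint F C := by
    rw [Set.disjoint_left]
    rintro f hf ((hc | ⟨y, hy, rfl⟩) | hc)
    · exact hc (hFP hf)
    · exact hy (hcon' y hf)
    · rw [Set.mem_singleton_iff] at hc; subst hc
      exact hy0 (hcon' y0 (filt_up hF hf le_sup_left))
  obtain ⟨Q, hQprime, hFQ, hQC⟩ := exists_prime_disjoint F C hF hCjoin hdisj
  have hQP : Q ⊆ P := by
    intro q hq
    by_contra h
    exact Set.disjoint_left.mp hQC hq (Or.inl (Or.inl h))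
  have := hmin Q hQprime hFQ hQP
  subst this
  exact Set.disjoint_left.mp hQC ht htC

lemma sup_prod_mem {F : Set α} (hF : IsFilter F) {ι : Type*} [DecidableEq ι] (a : ι → α) :
    ∀ S : Finset ι, S.Nonempty → (∀ i ∈ S, ∀ j ∈ S, i ≠ j → a i ⊔ a j ∈ F) →
      S.sup (fun i => ∏ j ∈ S.erase i, a j) ∈ F := by
  intro S
  induction S using Finset.cons_induction with
  | empty => intro h; exact absurd h (by simp)
  | cons k T hk ih =>
    intro _ hpair
    rcases T.eq_empty_or_nonempty with rfl | hT
    · rw [Finset.cons_eq_insert, Finset.sup_insert, Finset.sup_empty,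
        Finset.erase_insert (Finset.notMem_empty k), Finset.prod_empty, sup_bot_eq]
      exact filt_top_mem hF
    · have hpT : ∀ i ∈ T, ∀ j ∈ T, i ≠ j → a i ⊔ a j ∈ F := fun i hi j hj hij =>
        hpair i (Finset.mem_cons_of_mem hi) j (Finset.mem_cons_of_mem hj) hij
      have hu : T.sup (fun i => ∏ j ∈ T.erase i, a j) ∈ F := ih hT hpT
      rw [Finset.cons_eq_insert, Finset.sup_insert]
      have hfk : (∏ j ∈ (insert k T).erase k, a j) = ∏ j ∈ T, a j := by
        rw [Finset.erase_insert hk]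
      have hTsup : (T.sup fun i => ∏ j ∈ (insert k T).erase i, a j)
          = a k * T.sup (fun i => ∏ j ∈ T.erase i, a j) := by
        rw [rl_mul_finsup hT]
        refine Finset.sup_congr rfl (fun i hi => ?_)
        have hki : k ≠ i := fun h => hk (h ▸ hi)
        rw [Finset.erase_insert_of_ne hki,
          Finset.prod_insert (fun h => hk (Finset.mem_of_mem_erase h))]
      rw [hfk, hTsup]
      set u := T.sup (fun i => ∏ j ∈ T.erase i, a j) with hu_def
      set v := ∏ j ∈ T, a j with hv_def
      have hw : (∏ j ∈ T, (a k ⊔ a j)) ∈ F := by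
        refine filt_prod hF (fun j hj => ?_)
        exact hpair k (Finset.mem_cons_self k T) j (Finset.mem_cons_of_mem hj)
          (fun h => hk (h ▸ hj))
      have hkv : a k ⊔ v ∈ F := filt_up hF hw (rl_prod_sup_le T (a k) a)
      have hmul : (a k ⊔ v) * u ∈ F := filt_mul hF hkv hu
      refine filt_up hF hmul ?_
      rw [mul_comm, rl_mul_sup]
      apply sup_le
      · rw [mul_comm]; exact le_sup_right
      · exact le_trans (rl_mul_le_right _ _) le_sup_left


/-- Lemma 4.4: given `n ≥ 2` pairwise distinct `F`-minimal prime filters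
`m i`, there are `a i` pairwise in `F` with `a i ∉ m i`; and with `b i = ⊙_{j ≠ i} a j`:
each `b i ∈ m i`, the join of all the `b i` lies in `F`, and
`(F : ⋁_{j ≠ i} b j) ⊆ m i` for each `i`. -/
theorem stmt_16 (F : Set α) (hF : IsFilter F) (n : ℕ) (hn : 2 ≤ n)
    (m : Fin n → Set α) (hm : ∀ i, IsMinPrimeOver F (m i)) (hinj : Function.Injective m) :
    ∃ a : Fin n → α,
      (∀ i j, i ≠ j → a i ⊔ a j ∈ F) ∧
      (∀ i, a i ∉ m i) ∧
      (∀ i, (∏ j ∈ Finset.univ.erase i, a j) ∈ m i) ∧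
      (Finset.univ.sup (fun i => ∏ j ∈ Finset.univ.erase i, a j) ∈ F) ∧
      (∀ i, coann F
          ((Finset.univ.erase i).sup (fun k => ∏ j ∈ Finset.univ.erase k, a j)) ⊆ m i) := by
  classical
  -- Step A: separating elements
  have hxex : ∀ i j : Fin n, ∃ e : α, i ≠ j → e ∈ m j ∧ e ∉ m i := by
    intro i j
    by_cases hij : i = j
    · exact ⟨1, fun h => absurd hij h⟩
    · have hsub : ¬ m j ⊆ m i := by
        intro hsub
        exact hij (hinj ((hm i).2.2 (m j) (hm j).1 (hm j).2.1 hsub)).symm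
      obtain ⟨e, he1, he2⟩ := Set.not_subset.mp hsub
      exact ⟨e, fun _ => ⟨he1, he2⟩⟩
  choose x hx using hxex
  -- Step B
  set X : Fin n → α := fun i => (Finset.univ.erase i).sup (fun j => x i j) with hX
  have hXout : ∀ i, X i ∉ m i := by
    intro i hmem
    obtain ⟨j, hj, hxj⟩ := prime_sup_mem (hm i).1 hmem
    have hji : j ≠ i := (Finset.mem_erase.mp hj).1
    exact (hx i j hji.symm).2 hxj
  have hXin : ∀ i j, i ≠ j → X i ∈ m j := by
    intro i j hij
    have hjmem : j ∈ Finset.univ.erase i :=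
      Finset.mem_erase.mpr ⟨hij.symm, Finset.mem_univ j⟩
    exact filt_up (hm j).1.1 (hx i j hij).1 (Finset.le_sup (f := fun j => x i j) hjmem)
  -- Step C
  set t : Fin n → α := fun i => ∏ j ∈ Finset.univ.erase i, X j with ht
  have htin : ∀ i, t i ∈ m i := by
    intro i
    refine filt_prod (hm i).1.1 (fun j hj => ?_)
    exact hXin j i (Finset.mem_erase.mp hj).1
  have htout : ∀ i j, i ≠ j → t i ∉ m j := by
    intro i j hij
    refine down_notMem (hm j).1.1 ?_ (hXout j)
    exact rl_prod_le (Finset.mem_erase.mpr ⟨hij.symm, Finset.mem_univ j⟩)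
  -- Step D
  have hrex : ∀ i, ∃ r, r ∉ m i ∧ t i ⊔ r ∈ F :=
    fun i => minprime_witness hF (hm i) (htin i)
  choose r hr1 hr2 using hrex
  -- Step E
  set q : α := Finset.univ.sup (fun i : Fin n =>
    (Finset.univ.erase i).sup (fun j => t i * t j)) with hq
  have hq_not : ∀ k, q ∉ m k := by
    intro k hmem
    obtain ⟨i, _, hi⟩ := prime_sup_mem (hm k).1 hmem
    obtain ⟨j, hj, hij⟩ := prime_sup_mem (hm k).1 hi
    have hji : j ≠ i := (Finset.mem_erase.mp hj).1
    by_cases hik : i = k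
    · subst hik
      exact htout j i hji (filt_up (hm i).1.1 hij (rl_mul_le_right _ _))
    · exact htout i k (fun h => hik h) (filt_up (hm k).1.1 hij (rl_mul_le_left _ _))
  have hq_ge : ∀ i j : Fin n, i ≠ j → t i * t j ≤ q := by
    intro i j hij
    refine le_trans (Finset.le_sup (f := fun j' => t i * t j')
      (Finset.mem_erase.mpr ⟨hij.symm, Finset.mem_univ j⟩)) ?_
    exact Finset.le_sup (f := fun i' : Fin n => (Finset.univ.erase i').sup fun j' => t i' * t j')
      (Finset.mem_univ i)
  -- Step F
  haveI : Nonempty (Fin n) := ⟨⟨0, by omega⟩⟩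
  have haout : ∀ i, (r i ⊔ q) ∉ m i := by
    intro i hmem
    rcases (hm i).1.2.2 (r i) q hmem with h | h
    · exact hr1 i h
    · exact hq_not i h
  have haF : ∀ i j, i ≠ j → (r i ⊔ q) ⊔ (r j ⊔ q) ∈ F := by
    intro i j hij
    have key : (t i ⊔ r i) * (t j ⊔ r j) ∈ F := filt_mul hF (hr2 i) (hr2 j)
    refine filt_up hF key ?_
    rw [rl_mul_sup]
    apply sup_le
    · rw [mul_comm, rl_mul_sup]
      apply sup_le
      · refine le_trans ?_ (le_sup_left : r i ⊔ q ≤ _)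
        refine le_trans ?_ (le_sup_right : q ≤ r i ⊔ q)
        rw [mul_comm]; exact hq_ge i j hij
      · exact le_trans (rl_mul_le_right _ _) (le_trans le_sup_left le_sup_left)
    · exact le_trans (rl_mul_le_right _ _) (le_trans le_sup_left le_sup_right)
  have hamem : ∀ i j, i ≠ j → (r j ⊔ q) ∈ m i := by
    intro i j hij
    rcases (hm i).1.2.2 _ _ ((hm i).2.1 (haF i j hij)) with h | h
    · exact absurd h (haout i)
    · exact h
  refine ⟨fun i => r i ⊔ q, ?_, ?_, ?_, ?_, ?_⟩
  · exact fun i j hij => haF i j hij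
  · exact fun i => haout i
  · intro i
    refine filt_prod (hm i).1.1 (fun j hj => ?_)
    exact hamem i j (Ne.symm (Finset.mem_erase.mp hj).1)
  · exact sup_prod_mem hF (fun i => r i ⊔ q) Finset.univ Finset.univ_nonempty
      (fun i _ j _ hij => haF i j hij)
  · intro i c hc
    rcases (hm i).1.2.2 _ _ ((hm i).2.1 hc) with h | h
    · exfalso
      obtain ⟨k, hk, hbk⟩ := prime_sup_mem (hm i).1 h
      have hki : k ≠ i := (Finset.mem_erase.mp hk).1
      have hle : (∏ j ∈ Finset.univ.erase k, (r j ⊔ q)) ≤ r i ⊔ q :=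
        rl_prod_le (Finset.mem_erase.mpr ⟨hki.symm, Finset.mem_univ i⟩)
      exact haout i (filt_up (hm i).1.1 hbk hle)
    · exact h
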